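/- For every natural number n and all integers t and m, 220·∑_{j=1}^n G_{j+t−1}·G_{j+t}·G_{j+t+1}·G_{j+t+2}·G_{j+t+m} = (F_{m+2} + F_{m−3})·(−(G_{n+t+3}^5 − G_{t+3}^5) + 7·(G_{n+t+2}^5 − G_{t+2}^5) + 47·(G_{n+t+1}^5 − G_{t+1}^5)) + (F_{m+2} + F_{m−3})·(31·(G_{n+t}^5 − G_t^5) − 9·(G_{n+t−1}^5 − G_{t−1}^5) − (G_{n+t−2}^5 − G_{t−2}^5)) − 44·λ²·(F_{m+2} + F_{m−3})·(G_{n+t+2} − G_{t+2}) − 44·F_{m+2}·(G_{t+1}^5 − λ²·G_{t+1}) + 44·F_{m+2}·(G_{n+t+1}^5 − λ²·G_{n+t+1}). -/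

import Mathlib

lemma gib_ext (A B : ℤ → ℤ) (hA : ∀ k : ℤ, A (k + 2) = A (k + 1) + A k)
    (hB : ∀ k : ℤ, B (k + 2) = B (k + 1) + B k) (h0 : A 0 = B 0) (h1 : A 1 = B 1) :
    ∀ k : ℤ, A k = B k := by
  have key : ∀ k : ℤ, A k = B k ∧ A (k + 1) = B (k + 1) := by
    intro k
    induction k using Int.induction_on with
    | zero => exact ⟨h0, h1⟩
    | succ i ih =>
      refine ⟨ih.2, ?_⟩
      rw [show (i : ℤ) + 1 + 1 = i + 2 by ring, hA i, hB i, ih.1, ih.2]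
    | pred i ih =>
      have hA' := hA (-(i : ℤ) - 1)
      have hB' := hB (-(i : ℤ) - 1)
      rw [show -(i : ℤ) - 1 + 2 = -i + 1 by ring, show -(i : ℤ) - 1 + 1 = -i by ring]
        at hA' hB'
      refine ⟨by linarith [ih.1, ih.2], ?_⟩
      rw [show -(i : ℤ) - 1 + 1 = -i by ring]
      exact ih.1
  exact fun k => (key k).1

theorem sum_products_five (F : ℤ → ℤ) (hF0 : F 0 = 0) (hF1 : F 1 = 1)
    (hF : ∀ k : ℤ, F (k + 2) = F (k + 1) + F k)
    (G : ℤ → ℤ) (hG : ∀ k : ℤ, G (k + 2) = G (k + 1) + G k) (n : ℕ) (t m : ℤ) :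
    220 * ∑ j ∈ Finset.Icc 1 n,
        G ((j : ℤ) + t - 1) * G ((j : ℤ) + t) * G ((j : ℤ) + t + 1) * G ((j : ℤ) + t + 2) *
          G ((j : ℤ) + t + m) =
      (F (m + 2) + F (m - 3)) *
          (-(G ((n : ℤ) + t + 3) ^ 5 - G (t + 3) ^ 5) +
            7 * (G ((n : ℤ) + t + 2) ^ 5 - G (t + 2) ^ 5) +
            47 * (G ((n : ℤ) + t + 1) ^ 5 - G (t + 1) ^ 5)) +
        (F (m + 2) + F (m - 3)) *
          (31 * (G ((n : ℤ) + t) ^ 5 - G t ^ 5) -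
            9 * (G ((n : ℤ) + t - 1) ^ 5 - G (t - 1) ^ 5) -
            (G ((n : ℤ) + t - 2) ^ 5 - G (t - 2) ^ 5)) -
        44 * (G 1 ^ 2 - G 0 * G 2) ^ 2 * (F (m + 2) + F (m - 3)) *
          (G ((n : ℤ) + t + 2) - G (t + 2)) -
        44 * F (m + 2) * (G (t + 1) ^ 5 - (G 1 ^ 2 - G 0 * G 2) ^ 2 * G (t + 1)) +
        44 * F (m + 2) * (G ((n : ℤ) + t + 1) ^ 5 - (G 1 ^ 2 - G 0 * G 2) ^ 2 * G ((n : ℤ) + t + 1)) := by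
  -- Fibonacci at -1
  have hFm1 : F (-1 : ℤ) = 1 := by
    have h := hF (-1)
    norm_num at h
    rw [hF0, hF1] at h
    linarith
  -- addition formula
  have addG : ∀ c k : ℤ, G (c + k) = F k * G (c + 1) + F (k - 1) * G c := by
    intro c
    have hA : ∀ k : ℤ, G (c + (k + 2)) = G (c + (k + 1)) + G (c + k) := by
      intro k
      rw [show c + (k + 2) = (c + k) + 2 by ring, show c + (k + 1) = (c + k) + 1 by ring]
      exact hG (c + k)
    have hB : ∀ k : ℤ, F (k + 2) * G (c + 1) + F (k + 2 - 1) * G c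
        = (F (k + 1) * G (c + 1) + F (k + 1 - 1) * G c) + (F k * G (c + 1) + F (k - 1) * G c) := by
      intro k
      have h2 : F (k + 2 - 1) = F (k + 1 - 1) + F (k - 1) := by
        rw [show k + 2 - 1 = (k - 1) + 2 by ring, hF (k - 1),
          show k - 1 + 1 = k + 1 - 1 by ring]
      rw [hF k, h2]; ring
    have h0 : G (c + 0) = F 0 * G (c + 1) + F (0 - 1) * G c := by
      norm_num [hF0, hFm1]
    have h1' : G (c + 1) = F 1 * G (c + 1) + F (1 - 1) * G c := by
      norm_num [hF0, hF1]
    exact gib_ext (fun k => G (c + k)) (fun k => F k * G (c + 1) + F (k - 1) * G c) hA hB h0 h1'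
  -- squared invariant
  have inv : ∀ k : ℤ, (G (k + 1) ^ 2 - G k * G (k + 2)) ^ 2 = (G 1 ^ 2 - G 0 * G 2) ^ 2 := by
    intro k
    induction k using Int.induction_on with
    | zero => norm_num
    | succ i ih =>
      have h3 := hG ((i : ℤ) + 1)
      have h2 : G ((i : ℤ) + 1 + 1) = G (i + 1) + G i := by
        rw [show (i : ℤ) + 1 + 1 = i + 2 by ring]; exact hG i
      rw [hG i] at ih
      rw [h3, h2]
      linear_combination ih
    | pred i ih =>
      have hrec : G (-(i : ℤ) + 1) = G (-i) + G (-(i : ℤ) - 1) := by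
        have h := hG (-(i : ℤ) - 1)
        rw [show -(i : ℤ) - 1 + 2 = -i + 1 by ring, show -(i : ℤ) - 1 + 1 = -i by ring] at h
        linarith
      rw [hG (-(i : ℤ)), hrec] at ih
      rw [show -(i : ℤ) - 1 + 1 = -i by ring, show -(i : ℤ) - 1 + 2 = -i + 1 by ring, hrec]
      linear_combination ih
  -- Fibonacci shifts
  have hq1 : F (m + 1) = F m + F (m - 1) := by
    have h := hF (m - 1)
    rw [show m - 1 + 2 = m + 1 by ring, show m - 1 + 1 = m by ring] at h
    exact h
  have f2 : F (m + 2) = 2 * F m + F (m - 1) := by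
    have h := hF m
    linarith
  have f3 : F (m - 3) = 2 * F (m - 1) - F m := by
    have ha := hF (m - 3)
    rw [show m - 3 + 2 = m - 1 by ring, show m - 3 + 1 = m - 2 by ring] at ha
    have hb := hF (m - 2)
    rw [show m - 2 + 2 = m by ring, show m - 2 + 1 = m - 1 by ring] at hb
    linarith
  induction n with
  | zero =>
    simp only [Nat.cast_zero, zero_add]
    rw [show Finset.Icc 1 0 = (∅ : Finset ℕ) by rfl, Finset.sum_empty]
    ring
  | succ n ih =>
    rw [Finset.sum_Icc_succ_top (by omega : (1 : ℕ) ≤ n + 1)]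
    push_cast
    set N : ℤ := (n : ℤ) with hN
    -- local recurrences
    have g2 : G (N + t + 2) = G (N + t + 1) + G (N + t) := hG (N + t)
    have g3 : G (N + t + 3) = 2 * G (N + t + 1) + G (N + t) := by
      have h := hG (N + t + 1)
      rw [show N + t + 1 + 2 = N + t + 3 by ring, show N + t + 1 + 1 = N + t + 2 by ring] at h
      linarith [g2]
    have g4 : G (N + t + 4) = 3 * G (N + t + 1) + 2 * G (N + t) := by
      have h := hG (N + t + 2)
      rw [show N + t + 2 + 2 = N + t + 4 by ring, show N + t + 2 + 1 = N + t + 3 by ring] at h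
      linarith [g2, g3]
    have gm1 : G (N + t - 1) = G (N + t + 1) - G (N + t) := by
      have h := hG (N + t - 1)
      rw [show N + t - 1 + 2 = N + t + 1 by ring, show N + t - 1 + 1 = N + t by ring] at h
      linarith
    have gm2 : G (N + t - 2) = 2 * G (N + t) - G (N + t + 1) := by
      have h := hG (N + t - 2)
      rw [show N + t - 2 + 2 = N + t by ring, show N + t - 2 + 1 = N + t - 1 by ring] at h
      linarith [gm1]
    have gm : G (N + t + 1 + m)
        = F m * (G (N + t + 1) + G (N + t)) + F (m - 1) * G (N + t + 1) := by
      have h := addG (N + t + 1) m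
      rw [show N + t + 1 + 1 = N + t + 2 by ring, g2] at h
      exact h
    have hlam : (G 1 ^ 2 - G 0 * G 2) ^ 2
        = (G (N + t + 1) ^ 2 - G (N + t) * G (N + t + 2)) ^ 2 := (inv (N + t)).symm
    rw [show N + 1 + t + 3 = N + t + 4 by ring, show N + 1 + t + 2 = N + t + 3 by ring,
      show N + 1 + t + 1 = N + t + 2 by ring, show N + 1 + t - 1 = N + t by ring,
      show N + 1 + t - 2 = N + t - 1 by ring, show N + 1 + t + m = N + t + 1 + m by ring,
      show N + 1 + t = N + t + 1 by ring]
    rw [hlam, gm, g4, g3, gm1, g2, f2, f3]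
    rw [hlam, g3, gm2, gm1, g2, f2, f3] at ih
    linear_combination ih
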